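/- Let A, B, C, D be four points on a circle of radius R, ordered counterclockwise (i.e., forming a cyclic quadrilateral). Then for any α > 0, 1/|AC|^α + 1/|BD|^α < 1/|AD|^α + 1/|BC|^α, where |XY| denotes Euclidean distance. -/

import Mathlib

open Real Set

lemma chord_abs (x y : ℝ) :
    ‖Complex.exp (x * Complex.I) - Complex.exp (y * Complex.I)‖
      = 2 * |Real.sin ((x - y) / 2)| := by
  have hx : (x : ℂ) * Complex.I
      = (((x + y) / 2 : ℝ) : ℂ) * Complex.I + (((x - y) / 2 : ℝ) : ℂ) * Complex.I := by
    push_cast; ring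
  have hy : (y : ℂ) * Complex.I
      = (((x + y) / 2 : ℝ) : ℂ) * Complex.I + (-(((x - y) / 2 : ℝ) : ℂ)) * Complex.I := by
    push_cast; ring
  rw [hx, hy, Complex.exp_add, Complex.exp_add, ← mul_sub, norm_mul,
    Complex.norm_exp_ofReal_mul_I, one_mul]
  have : Complex.exp ((((x - y) / 2 : ℝ) : ℂ) * Complex.I)
      - Complex.exp ((-(((x - y) / 2 : ℝ) : ℂ)) * Complex.I)
      = (2 * Real.sin ((x - y) / 2) : ℝ) * Complex.I := by
    rw [Complex.exp_mul_I, Complex.exp_mul_I, Complex.cos_neg, Complex.sin_neg]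
    push_cast [Complex.ofReal_sin]
    ring
  rw [this, norm_mul, Complex.norm_I, mul_one, Complex.norm_real, Real.norm_eq_abs, abs_mul]
  simp

lemma sin_rpow_strictConvex {α : ℝ} (hα : 0 < α) :
    StrictConvexOn ℝ (Set.Ioo 0 Real.pi) (fun x => Real.sin x ^ (-α)) := by
  have hsin : ∀ x ∈ Set.Ioo (0:ℝ) Real.pi, 0 < Real.sin x := fun x hx =>
    Real.sin_pos_of_pos_of_lt_pi hx.1 hx.2
  set φ : ℝ → ℝ := fun y => Real.cos y * (-α) * Real.sin y ^ (-α - 1) with hφ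
  have hder : ∀ y ∈ Set.Ioo (0:ℝ) Real.pi,
      HasDerivAt (fun x => Real.sin x ^ (-α)) (φ y) y := by
    intro y hy
    exact (Real.hasDerivAt_sin y).rpow_const (Or.inl (hsin y hy).ne')
  apply strictConvexOn_of_deriv2_pos (convex_Ioo _ _)
  · exact fun x hx => ((hder x hx).differentiableAt.continuousAt).continuousWithinAt
  · rw [isOpen_Ioo.interior_eq]
    intro x hx
    have hs := hsin x hx
    have heq : deriv (fun x => Real.sin x ^ (-α)) =ᶠ[nhds x] φ :=
      (isOpen_Ioo.eventually_mem hx).mono fun y hy => (hder y hy).deriv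
    have hφder : HasDerivAt φ
        ((-Real.sin x) * (-α) * Real.sin x ^ (-α - 1)
          + (Real.cos x * (-α)) * (Real.cos x * (-α - 1) * Real.sin x ^ (-α - 1 - 1))) x := by
      exact ((Real.hasDerivAt_cos x).mul_const (-α)).mul
        ((Real.hasDerivAt_sin x).rpow_const (Or.inl hs.ne'))
    have h2 : deriv^[2] (fun x => Real.sin x ^ (-α)) x
        = (-Real.sin x) * (-α) * Real.sin x ^ (-α - 1)
          + (Real.cos x * (-α)) * (Real.cos x * (-α - 1) * Real.sin x ^ (-α - 1 - 1)) := by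
      simp only [Function.iterate_succ, Function.iterate_zero, Function.comp_apply, id_eq]
      rw [heq.deriv_eq]
      exact hφder.deriv
    rw [h2]
    have p1 : 0 < Real.sin x ^ (-α - 1) := Real.rpow_pos_of_pos hs _
    have p2 : 0 < Real.sin x ^ (-α - 1 - 1) := Real.rpow_pos_of_pos hs _
    nlinarith [mul_pos (mul_pos hα hs) p1, mul_nonneg (mul_nonneg (mul_nonneg hα.le
      (by linarith : (0:ℝ) ≤ α + 1)) (mul_self_nonneg (Real.cos x))) p2.le]

lemma pair_lt {α : ℝ} (hα : 0 < α) {p q r s : ℝ}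
    (hp : p ∈ Set.Ioo 0 Real.pi) (hq : q ∈ Set.Ioo 0 Real.pi)
    (hr : r ∈ Set.Ioo 0 Real.pi) (hs : s ∈ Set.Ioo 0 Real.pi)
    (hsum : p + q = r + s) (hsp : s < p) (hpr : p < r) :
    Real.sin p ^ (-α) + Real.sin q ^ (-α) < Real.sin r ^ (-α) + Real.sin s ^ (-α) := by
  have hg := sin_rpow_strictConvex hα
  have hrs : s < r := hsp.trans hpr
  set l : ℝ := (r - p) / (r - s) with hl
  have hd : (0:ℝ) < r - s := by linarith
  have hl0 : 0 < l := div_pos (by linarith) hd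
  have hl1 : 0 < 1 - l := by
    have : l < 1 := (div_lt_one hd).2 (by linarith)
    linarith
  have e1 : l * s + (1 - l) * r = p := by rw [hl]; field_simp; ring
  have hq' : q = r + s - p := by linarith
  have e2 : (1 - l) * s + l * r = q := by rw [hl, hq']; field_simp; ring
  have h1 := hg.2 hs hr hrs.ne hl0 hl1 (by ring)
  have h2 := hg.2 hs hr hrs.ne hl1 hl0 (by ring)
  simp only [smul_eq_mul] at h1 h2
  rw [e1] at h1
  rw [e2] at h2
  calc Real.sin p ^ (-α) + Real.sin q ^ (-α)
      < (l * Real.sin s ^ (-α) + (1-l) * Real.sin r ^ (-α))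
        + ((1-l) * Real.sin s ^ (-α) + l * Real.sin r ^ (-α)) := by exact add_lt_add h1 h2
    _ = Real.sin r ^ (-α) + Real.sin s ^ (-α) := by ring

lemma dist_chord {R x y : ℝ} (hR : 0 < R) (hxy : x < y) (h2 : y < x + 2 * Real.pi) :
    dist ((R : ℂ) * Complex.exp (x * Complex.I)) ((R : ℂ) * Complex.exp (y * Complex.I))
      = 2 * R * Real.sin ((y - x) / 2) := by
  have hmem : (y - x) / 2 ∈ Set.Ioo 0 Real.pi := by
    constructor <;> [linarith; linarith]
  have hsp : 0 < Real.sin ((y - x) / 2) := Real.sin_pos_of_pos_of_lt_pi hmem.1 hmem.2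
  rw [Complex.dist_eq, ← mul_sub, norm_mul, Complex.norm_real, Real.norm_eq_abs, abs_of_pos hR, chord_abs]
  have : (x - y) / 2 = -((y - x) / 2) := by ring
  rw [this, Real.sin_neg, abs_neg, abs_of_pos hsp]
  ring

/-- For a cyclic quadrilateral `A, B, C, D` on a circle of radius `R`, ordered
counterclockwise, and any `α > 0`:
`1/|AC|^α + 1/|BD|^α < 1/|AD|^α + 1/|BC|^α`. -/
theorem stmt_4 (R α θA θB θC θD : ℝ) (hR : 0 < R) (hα : 0 < α)
    (hAB : θA < θB) (hBC : θB < θC) (hCD : θC < θD) (hDA : θD < θA + 2 * Real.pi)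
    (A B C D : ℂ)
    (hA : A = R * Complex.exp (θA * Complex.I))
    (hB : B = R * Complex.exp (θB * Complex.I))
    (hC : C = R * Complex.exp (θC * Complex.I))
    (hD : D = R * Complex.exp (θD * Complex.I)) :
    1 / dist A C ^ α + 1 / dist B D ^ α < 1 / dist A D ^ α + 1 / dist B C ^ α := by
  have hpi := Real.pi_pos
  set p : ℝ := (θC - θA) / 2 with hp
  set q : ℝ := (θD - θB) / 2 with hq
  set r : ℝ := (θD - θA) / 2 with hr
  set s : ℝ := (θC - θB) / 2 with hs
  have hpmem : p ∈ Set.Ioo 0 Real.pi := ⟨by rw [hp]; linarith, by rw [hp]; linarith⟩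
  have hqmem : q ∈ Set.Ioo 0 Real.pi := ⟨by rw [hq]; linarith, by rw [hq]; linarith⟩
  have hrmem : r ∈ Set.Ioo 0 Real.pi := ⟨by rw [hr]; linarith, by rw [hr]; linarith⟩
  have hsmem : s ∈ Set.Ioo 0 Real.pi := ⟨by rw [hs]; linarith, by rw [hs]; linarith⟩
  have dAC : dist A C = 2 * R * Real.sin p := by
    rw [hA, hC]; exact dist_chord hR (by linarith) (by linarith)
  have dBD : dist B D = 2 * R * Real.sin q := by
    rw [hB, hD]; exact dist_chord hR (by linarith) (by linarith)
  have dAD : dist A D = 2 * R * Real.sin r := by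
    rw [hA, hD]; exact dist_chord hR (by linarith) (by linarith)
  have dBC : dist B C = 2 * R * Real.sin s := by
    rw [hB, hC]; exact dist_chord hR (by linarith) (by linarith)
  have hterm : ∀ t ∈ Set.Ioo (0:ℝ) Real.pi,
      1 / (2 * R * Real.sin t) ^ α = (2 * R) ^ (-α) * Real.sin t ^ (-α) := by
    intro t ht
    have hst : 0 < Real.sin t := Real.sin_pos_of_pos_of_lt_pi ht.1 ht.2
    rw [Real.mul_rpow (by positivity) hst.le, one_div, mul_inv,
      ← Real.rpow_neg (by positivity : (0:ℝ) ≤ 2 * R), ← Real.rpow_neg hst.le]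
  rw [dAC, dBD, dAD, dBC, hterm p hpmem, hterm q hqmem, hterm r hrmem, hterm s hsmem,
    ← mul_add, ← mul_add]
  have hc : 0 < (2 * R) ^ (-α) := Real.rpow_pos_of_pos (by linarith) _
  exact (mul_lt_mul_iff_right₀ hc).2
    (pair_lt hα hpmem hqmem hrmem hsmem (by rw [hp, hq, hr, hs]; ring)
      (by rw [hs, hp]; linarith) (by rw [hp, hr]; linarith))
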